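/- For r > k ≥ 4 and t ≥ 1, there exists an edge-coloring of K_r^t with no rainbow K_k using exactly t²·ex(K_r, K_{k−1}) + 1 colors. (Lower bound via the Turán coloring.) -/

import Mathlib

open Classical

noncomputable section

lemma edgeSet_ncard_eq_edgeFinset_card {V : Type*} [Fintype V] (G : SimpleGraph V)
    [Fintype G.edgeSet] [DecidableRel G.Adj] : G.edgeSet.ncard = G.edgeFinset.card := by
  exact Set.ncard_eq_toFinset_card' _

lemma comap_edge_ncard {r t : ℕ} (H : SimpleGraph (Fin r)) :
    (SimpleGraph.comap (Sigma.fst : (Σ _ : Fin r, Fin t) → Fin r) H).edgeSet.ncard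
      = t ^ 2 * H.edgeSet.ncard := by
  classical
  set G' := SimpleGraph.comap (Sigma.fst : (Σ _ : Fin r, Fin t) → Fin r) H with hG'
  have e : G'.Dart ≃ H.Dart × (Fin t × Fin t) :=
    { toFun := fun d => (⟨(d.toProd.1.1, d.toProd.2.1), d.adj⟩, (d.toProd.1.2, d.toProd.2.2))
      invFun := fun p => ⟨(⟨p.1.toProd.1, p.2.1⟩, ⟨p.1.toProd.2, p.2.2⟩), p.1.adj⟩
      left_inv := fun d => rfl
      right_inv := fun p => rfl }
  have hcard : Fintype.card G'.Dart = Fintype.card H.Dart * t ^ 2 := by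
    rw [Fintype.card_congr e]
    simp [Fintype.card_prod, sq]
  have h1 := SimpleGraph.dart_card_eq_twice_card_edges (G := G')
  have h2 := SimpleGraph.dart_card_eq_twice_card_edges (G := H)
  have e1 := edgeSet_ncard_eq_edgeFinset_card G'
  have e2 := edgeSet_ncard_eq_edgeFinset_card H
  have key : 2 * G'.edgeFinset.card = 2 * (t ^ 2 * H.edgeFinset.card) := by
    rw [← h1, hcard, h2]; ring
  have h3 := Nat.eq_of_mul_eq_mul_left (by norm_num : 0 < 2) key
  rw [e1, e2, h3]

/-- A rainbow `k`-clique in the edge-colored graph `G^c`. -/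
def HasRainbowClique {V : Type*} (G : SimpleGraph V) (c : Sym2 V → ℕ) (k : ℕ) : Prop :=
  ∃ S : Finset V, S.card = k ∧ (∀ x ∈ S, ∀ y ∈ S, x ≠ y → G.Adj x y) ∧
    ∀ x ∈ S, ∀ y ∈ S, ∀ z ∈ S, ∀ w ∈ S,
      x ≠ y → z ≠ w → c s(x, y) = c s(z, w) → s(x, y) = s(z, w)

/-- The number of colors used on the edges of `G`. -/
noncomputable def ncolors {V : Type*} (G : SimpleGraph V) (c : Sym2 V → ℕ) : ℕ :=
  (c '' G.edgeSet).ncard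

/-- The anti-Ramsey number `ar(G, K_k)`: the maximum number of colors of an
edge-coloring of `G` without a rainbow `K_k`. -/
noncomputable def antiRamsey {V : Type*} (G : SimpleGraph V) (k : ℕ) : ℕ :=
  sSup {m | ∃ c : Sym2 V → ℕ, ¬ HasRainbowClique G c k ∧ ncolors G c = m}

/-- The Turán number `ex(K_n, K_m)`: the maximum number of edges of a
`K_m`-free subgraph of `K_n`. -/
noncomputable def exNum (n m : ℕ) : ℕ :=
  sSup {e | ∃ H : SimpleGraph (Fin n), H.CliqueFree m ∧ H.edgeSet.ncard = e}

/-- The complete multipartite graph `K_{n 0, …, n (r-1)}` with partite sets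
`U_i = {i} × Fin (n i)`. -/
def KMP (r : ℕ) (n : ℕ → ℕ) : SimpleGraph (Σ i : Fin r, Fin (n i)) :=
  SimpleGraph.completeMultipartiteGraph (fun i : Fin r => Fin (n i))

lemma exNum_attained (n m : ℕ) (hm : 2 ≤ m) :
    ∃ H : SimpleGraph (Fin n), H.CliqueFree m ∧ H.edgeSet.ncard = exNum n m := by
  classical
  have hne : {e | ∃ H : SimpleGraph (Fin n), H.CliqueFree m ∧ H.edgeSet.ncard = e}.Nonempty :=
    ⟨0, ⊥, SimpleGraph.cliqueFree_bot hm, by simp⟩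
  have hbdd : BddAbove {e | ∃ H : SimpleGraph (Fin n), H.CliqueFree m ∧ H.edgeSet.ncard = e} := by
    refine ⟨Fintype.card (Sym2 (Fin n)), ?_⟩
    rintro e ⟨H, -, rfl⟩
    calc H.edgeSet.ncard ≤ (Set.univ : Set (Sym2 (Fin n))).ncard :=
          Set.ncard_le_ncard (Set.subset_univ _) Set.finite_univ
      _ = Fintype.card (Sym2 (Fin n)) := by simp [Set.ncard_univ]
  have := Nat.sSup_mem hne hbdd
  obtain ⟨H, h1, h2⟩ := this
  exact ⟨H, h1, h2⟩

/-- Lower bound (Turán coloring): for `r > k ≥ 4` and `t ≥ 1` there is an edge-coloring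
of `K_r^t` with no rainbow `K_k` using exactly `t² ex(K_r, K_{k-1}) + 1` colors. -/
theorem exists_turan_coloring (r k t : ℕ) (hk : 4 ≤ k) (hkr : k < r) (ht : 1 ≤ t) :
    ∃ c : Sym2 (Σ _ : Fin r, Fin t) → ℕ,
      ¬ HasRainbowClique (KMP r (fun _ => t)) c k ∧
      ncolors (KMP r (fun _ => t)) c = t ^ 2 * exNum r (k - 1) + 1 := by
  classical
  obtain ⟨H, hHfree, hHcard⟩ := exNum_attained r (k - 1) (by omega)
  set V := (Σ _ : Fin r, Fin t) with hV
  set G' := SimpleGraph.comap (Sigma.fst : V → Fin r) H with hG'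
  -- an injection Sym2 V → ℕ
  have : Fintype (Sym2 V) := Fintype.ofFinite _
  set enc : Sym2 V → ℕ := fun e => ((Fintype.equivFin (Sym2 V)) e).val with henc
  have henc_inj : Function.Injective enc := fun a b h => by
    have := Fin.val_injective h
    exact (Fintype.equivFin (Sym2 V)).injective this
  set c : Sym2 V → ℕ := fun e => if e ∈ G'.edgeSet then enc e + 1 else 0 with hc
  -- a non-edge of H
  obtain ⟨i0, j0, hij, hnadj⟩ : ∃ i j : Fin r, i ≠ j ∧ ¬ H.Adj i j := by
    by_contra hcon
    push_neg at hcon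
    obtain ⟨T, hTsub, hTcard⟩ := Finset.exists_subset_card_eq (s := (Finset.univ : Finset (Fin r)))
      (n := k - 1) (by simp; omega)
    exact hHfree T ⟨fun x _ y _ hxy => hcon x y hxy, hTcard⟩
  have hsubset : G'.edgeSet ⊆ (KMP r (fun _ => t)).edgeSet := by
    intro e
    induction e using Sym2.ind with
    | _ u v =>
      intro h
      rw [SimpleGraph.mem_edgeSet] at h ⊢
      have h' : H.Adj u.1 v.1 := h
      exact h'.ne
  refine ⟨c, ?_, ?_⟩
  · -- no rainbow k-clique
    rintro ⟨S, hScard, hSadj, hrb⟩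
    have hfst : ∀ x ∈ S, ∀ y ∈ S, x.1 = y.1 → x = y := by
      intro x hx y hy h
      by_contra hne
      have h' : x.fst ≠ y.fst := hSadj x hx y hy hne
      exact h' h
    set T : Finset (Fin r) := S.image Sigma.fst with hT
    have hTcard : T.card = k := by
      rw [hT, Finset.card_image_of_injOn, hScard]
      intro x hx y hy h
      exact hfst x hx y hy h
    -- for elements of T pick preimages
    have hpre : ∀ i ∈ T, ∃ u ∈ S, u.1 = i := by
      intro i hi
      obtain ⟨u, hu, rfl⟩ := Finset.mem_image.mp hi
      exact ⟨u, hu, rfl⟩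
    -- color of a pair of S-vertices with non-adjacent projections is 0
    have hc0 : ∀ u v : V, ¬ H.Adj u.1 v.1 → c s(u, v) = 0 := by
      intro u v h
      have : s(u, v) ∉ G'.edgeSet := by
        rw [SimpleGraph.mem_edgeSet]
        exact h
      simp [hc, this]
    by_cases hall : ∀ x ∈ T, ∀ y ∈ T, x ≠ y → H.Adj x y
    · exact (hHfree.mono (by omega : k - 1 ≤ k)) T ⟨fun x hx y hy hxy => hall x hx y hy hxy, hTcard⟩
    · push_neg at hall
      obtain ⟨x0, hx0, y0, hy0, hxy0, hnadj0⟩ := hall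
      obtain ⟨p, hp, hp1⟩ := hpre x0 hx0
      obtain ⟨q, hq, hq1⟩ := hpre y0 hy0
      have hpq : p ≠ q := fun h => hxy0 (by rw [← hp1, ← hq1, h])
      refine hHfree (T.erase x0) ⟨?_, by rw [Finset.card_erase_of_mem hx0, hTcard]⟩
      intro x hx y hy hxy
      have hxT := Finset.mem_of_mem_erase hx
      have hyT := Finset.mem_of_mem_erase hy
      have hxne : x ≠ x0 := Finset.ne_of_mem_erase hx
      have hyne : y ≠ x0 := Finset.ne_of_mem_erase hy
      by_contra hno
      obtain ⟨u, hu, hu1⟩ := hpre x hxT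
      obtain ⟨v, hv, hv1⟩ := hpre y hyT
      have huv : u ≠ v := fun h => hxy (by rw [← hu1, ← hv1, h])
      have h1 : c s(u, v) = 0 := hc0 u v (by rw [hu1, hv1]; exact hno)
      have h2 : c s(p, q) = 0 := hc0 p q (by rw [hp1, hq1]; exact hnadj0)
      have := hrb u hu v hv p hp q hq huv hpq (by rw [h1, h2])
      rw [Sym2.eq_iff] at this
      rcases this with ⟨h, -⟩ | ⟨-, h⟩
      · exact hxne (by rw [← hu1, h, hp1])
      · exact hyne (by rw [← hv1, h, hp1])
  · -- number of colors
    have himg : c '' (KMP r (fun _ => t)).edgeSet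
        = insert 0 ((fun e => enc e + 1) '' G'.edgeSet) := by
      apply Set.Subset.antisymm
      · rintro x ⟨e, he, rfl⟩
        by_cases h : e ∈ G'.edgeSet
        · exact Set.mem_insert_iff.mpr (Or.inr ⟨e, h, by simp [hc, h]⟩)
        · simp [hc, h]
      · rintro x hx
        rcases Set.mem_insert_iff.mp hx with rfl | ⟨e, he, rfl⟩
        · refine ⟨s(⟨i0, ⟨0, ht⟩⟩, ⟨j0, ⟨0, ht⟩⟩), ?_, ?_⟩
          · rw [SimpleGraph.mem_edgeSet]
            exact hij
          · have : s((⟨i0, ⟨0, ht⟩⟩ : V), ⟨j0, ⟨0, ht⟩⟩) ∉ G'.edgeSet := by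
              rw [SimpleGraph.mem_edgeSet]
              exact hnadj
            rw [hc]; exact if_neg this
        · exact ⟨e, hsubset he, by simp [hc, he]⟩
    rw [ncolors, himg]
    have hfin : ((fun e => enc e + 1) '' G'.edgeSet).Finite := Set.toFinite _
    rw [Set.ncard_insert_of_notMem (by rintro ⟨e, -, h⟩; simp at h) hfin,
      Set.ncard_image_of_injective _ (fun a b h => henc_inj (by simpa using h)),
      comap_edge_ncard, hHcard]
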